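/- Let F be a subfield of ℝ, d ∈ F with d > 0 and √d ∉ F, and K = [√d, ∞) ⊂ ℝ. Then Pos(K) = {f ∈ F[x] : f ≥ 0 on K} is not a finitely generated preordering of F[x]; i.e., there is no finite set f₁,…,f_s ∈ Pos(K) such that every element of Pos(K) lies in the preordering ∑_{e∈{0,1}^s} F_{≥0} F[x]² f^e generated by them. -/

import Mathlib

open Polynomial

noncomputable def pev (F : Subfield ℝ) (f : F[X]) (x : ℝ) : ℝ := Polynomial.aeval x f

/-- `σ` is a finite sum of terms `t·g²` with `t ∈ F`, `t ≥ 0`, `g ∈ F[x]`. -/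
def SumWtSq (F : Subfield ℝ) (σ : F[X]) : Prop :=
  ∃ (n : ℕ) (t : Fin n → F) (g : Fin n → F[X]),
    (∀ i, (0:ℝ) ≤ (t i : ℝ)) ∧ σ = ∑ i, C (t i) * g i ^ 2


/-- membership in the preordering of `F[x]` generated by `g 0, …, g (s-1)`. -/
def InPre (F : Subfield ℝ) {s : ℕ} (g : Fin s → F[X]) (f : F[X]) : Prop :=
  ∃ σ : (Fin s → Bool) → F[X], (∀ e, SumWtSq F (σ e)) ∧
    f = ∑ e : Fin s → Bool, σ e * ∏ i, (if e i then g i else 1)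

set_option maxHeartbeats 1000000
set_option synthInstance.maxHeartbeats 400000

namespace Stmt8Aux

open Filter

@[simp] lemma algmap (F : Subfield ℝ) (t : F) : algebraMap F ℝ t = (t : ℝ) := rfl

lemma pev_mul (F : Subfield ℝ) (a b : F[X]) (x : ℝ) :
    pev F (a * b) x = pev F a x * pev F b x := map_mul (Polynomial.aeval x) a b

lemma pev_C (F : Subfield ℝ) (t : F) (x : ℝ) : pev F (C t) x = (t : ℝ) := by
  simp [pev]

lemma pev_map (F : Subfield ℝ) (q : F[X]) (x : ℝ) :
    pev F q x = (q.map (algebraMap F ℝ)).eval x := by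
  rw [pev, aeval_def, eval_map]

/-- a real polynomial squeezed between `0` and `p` on `[r,∞)` has degree at most that of `p`. -/
lemma natDegree_le_of_squeeze (q p : ℝ[X]) (r : ℝ) (hp : p ≠ 0)
    (h0 : ∀ x, r ≤ x → 0 ≤ q.eval x) (h1 : ∀ x, r ≤ x → q.eval x ≤ p.eval x) :
    q.natDegree ≤ p.natDegree := by
  by_contra hc
  push_neg at hc
  have hq0 : q ≠ 0 := by
    rintro rfl; simp at hc
  have hdlt : p.degree < q.degree := degree_lt_degree hc
  have hdq : 0 < q.degree := by
    refine lt_of_le_of_lt ?_ hdlt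
    exact zero_le_degree_iff.mpr hp
  have hlcq : 0 ≤ q.leadingCoeff := by
    by_contra hneg
    push_neg at hneg
    have hbot : Tendsto (fun x => q.eval x) atTop atBot :=
      tendsto_atBot_of_leadingCoeff_nonpos q hdq hneg.le
    obtain ⟨x, hx1, hx2⟩ := ((hbot.eventually_le_atBot (-1)).and (eventually_ge_atTop r)).exists
    have := h0 x hx2
    linarith
  have htop : Tendsto (fun x => q.eval x) atTop atTop :=
    tendsto_atTop_of_leadingCoeff_nonneg q hdq hlcq
  have hzero : Tendsto (fun x => p.eval x / q.eval x) atTop (nhds 0) :=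
    div_tendsto_zero_of_degree_lt p q hdlt
  have hev1 : ∀ᶠ x in atTop, (1:ℝ) ≤ p.eval x / q.eval x := by
    filter_upwards [htop.eventually_ge_atTop 1, eventually_ge_atTop r] with x hx1 hxr
    have hq : (0:ℝ) < q.eval x := lt_of_lt_of_le one_pos hx1
    exact (one_le_div hq).mpr (h1 x hxr)
  have hev2 : ∀ᶠ x in atTop, p.eval x / q.eval x < 1 := by
    have : Set.Iio (1:ℝ) ∈ nhds (0:ℝ) := Iio_mem_nhds one_pos
    exact hzero.eventually this
  obtain ⟨x, hx1, hx2⟩ := (hev1.and hev2).exists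
  linarith

/-- value at the left endpoint of positivity. -/
lemma eval_nonneg_boundary (P : ℝ[X]) (r : ℝ) (h : ∀ x, r < x → 0 ≤ P.eval x) :
    0 ≤ P.eval r := by
  have hc : Tendsto (fun x => P.eval x) (nhdsWithin r (Set.Ioi r)) (nhds (P.eval r)) :=
    (P.continuous.tendsto r).mono_left nhdsWithin_le_nhds
  refine ge_of_tendsto hc ?_
  exact eventually_mem_nhdsWithin.mono (fun x hx => h x hx)

variable {F : Subfield ℝ} {d : F}

lemma pev_p (hd : 0 < (d:ℝ)) (x : ℝ) :
    pev F (X ^ 2 - C d) x = x ^ 2 - (d : ℝ) := by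
  simp [pev]

/-- key divisibility: `X² - d` is the minimal polynomial of `√d`. -/
lemma dvd_of_root (hd : 0 < (d:ℝ)) (hirr : Real.sqrt (d:ℝ) ∉ F) (q : F[X])
    (hq : pev F q (Real.sqrt (d:ℝ)) = 0) : (X ^ 2 - C d) ∣ q := by
  set r := Real.sqrt (d:ℝ) with hr
  have hr2 : r ^ 2 = (d:ℝ) := Real.sq_sqrt hd.le
  have hmon : (X ^ 2 - C d : F[X]).Monic := monic_X_pow_sub_C d two_ne_zero
  have hpev : pev F (X ^ 2 - C d) r = 0 := by rw [pev_p hd, hr2, sub_self]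
  have hdiv := modByMonic_add_div q (X ^ 2 - C d)
  set ρ := q %ₘ (X ^ 2 - C d) with hρ
  have hnat : ρ.natDegree ≤ 1 := by
    rcases eq_or_ne ρ 0 with h | h
    · simp [h]
    · have hlt : ρ.degree < (2:ℕ) := by
        have := degree_modByMonic_lt q hmon
        rwa [degree_X_pow_sub_C (by norm_num) d] at this
      have := (natDegree_lt_iff_degree_lt h).mpr hlt
      omega
  have hform := eq_X_add_C_of_natDegree_le_one hnat
  have hρval : pev F ρ r = 0 := by
    have h1 := congrArg (fun z => pev F z r) hdiv
    simp only [pev, map_add, map_mul] at h1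
    have hpev' : (Polynomial.aeval r) (X ^ 2 - C d : F[X]) = 0 := hpev
    have hq' : (Polynomial.aeval r) q = 0 := hq
    rw [hpev', hq', zero_mul, add_zero] at h1
    exact h1
  have hval : (ρ.coeff 1 : ℝ) * r + (ρ.coeff 0 : ℝ) = 0 := by
    have h2 := congrArg (fun z => pev F z r) hform
    simp only [pev, map_add, map_mul, aeval_C, aeval_X, algmap] at h2
    have hρval' : (Polynomial.aeval r) ρ = 0 := hρval
    rw [hρval'] at h2
    exact h2.symm
  have hc1 : ρ.coeff 1 = 0 := by
    by_contra hne
    have hne' : ((ρ.coeff 1 : ℝ)) ≠ 0 := by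
      simpa using (Subtype.coe_injective.ne_iff.mpr hne)
    have : r = ((-(ρ.coeff 0) / ρ.coeff 1 : F) : ℝ) := by
      push_cast
      field_simp
      linarith [hval]
    exact hirr (this ▸ (-(ρ.coeff 0) / ρ.coeff 1 : F).2)
  have hc0 : ρ.coeff 0 = 0 := by
    have : (ρ.coeff 0 : ℝ) = 0 := by
      rw [hc1] at hval
      push_cast at hval
      linarith
    exact_mod_cast this
  have hρ0 : ρ = 0 := by rw [hform, hc1, hc0]; simp
  exact (modByMonic_eq_zero_iff_dvd hmon).mp hρ0

lemma wsos_nonneg {σ : F[X]} (h : SumWtSq F σ) (x : ℝ) : 0 ≤ pev F σ x := by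
  obtain ⟨n, t, g, ht, rfl⟩ := h
  simp only [pev, map_sum, map_mul, map_pow, aeval_C]
  exact Finset.sum_nonneg fun i _ => mul_nonneg (ht i) (sq_nonneg _)

lemma sq_dvd_wsos (hd : 0 < (d:ℝ)) (hirr : Real.sqrt (d:ℝ) ∉ F) {σ : F[X]}
    (h : SumWtSq F σ) (hz : pev F σ (Real.sqrt (d:ℝ)) = 0) :
    (X ^ 2 - C d) ^ 2 ∣ σ := by
  set r := Real.sqrt (d:ℝ) with hr
  obtain ⟨n, t, g, ht, rfl⟩ := h
  have hterms : ∀ i ∈ Finset.univ, (0:ℝ) ≤ (t i : ℝ) * (pev F (g i) r) ^ 2 :=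
    fun i _ => mul_nonneg (ht i) (sq_nonneg _)
  have hsum : ∑ i : Fin n, (t i : ℝ) * (pev F (g i) r) ^ 2 = 0 := by
    have := hz
    simp only [pev, map_sum, map_mul, map_pow, aeval_C] at this
    simpa [pev] using this
  have hzero := (Finset.sum_eq_zero_iff_of_nonneg hterms).mp hsum
  apply Finset.dvd_sum
  intro i _
  rcases eq_or_ne (t i) 0 with h0 | h0
  · simp [h0]
  · have hcoe : ((t i : ℝ)) ≠ 0 := by
      simpa using (Subtype.coe_injective.ne_iff.mpr h0)
    have hgr : pev F (g i) r = 0 := by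
      have := hzero i (Finset.mem_univ i)
      rcases mul_eq_zero.mp this with h | h
      · exact absurd h hcoe
      · exact pow_eq_zero_iff two_ne_zero |>.mp h
    obtain ⟨c, hc⟩ := dvd_of_root hd hirr (g i) hgr
    exact ⟨C (t i) * c ^ 2, by rw [hc]; ring⟩

/-- a polynomial of degree ≤ 1 that is nonnegative everywhere has zero linear coefficient. -/
lemma coeff_one_eq_zero_of_nonneg (q : F[X]) (hdeg : q.natDegree ≤ 1)
    (h : ∀ x : ℝ, 0 ≤ pev F q x) : q.coeff 1 = 0 := by
  by_contra hne
  have hne' : ((q.coeff 1 : ℝ)) ≠ 0 := by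
    simpa using (Subtype.coe_injective.ne_iff.mpr hne)
  have hform := eq_X_add_C_of_natDegree_le_one hdeg
  set c1 : ℝ := (q.coeff 1 : ℝ)
  set c0 : ℝ := (q.coeff 0 : ℝ)
  have hval : pev F q ((-1 - c0) / c1) = -1 := by
    have := congrArg (fun z => pev F z ((-1 - c0) / c1)) hform.symm
    simp only [pev, map_add, map_mul, aeval_C, aeval_X] at this
    rw [← pev] at this
    rw [← this]
    field_simp
    change c1 * (-1 - c0) + c1 * c0 = -c1
    ring
  have := h ((-1 - c0) / c1)
  rw [hval] at this
  linarith

end Stmt8Aux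

open Stmt8Aux Filter in
theorem stmt8 (F : Subfield ℝ) (d : F) (hd : 0 < (d:ℝ)) (hirr : Real.sqrt (d:ℝ) ∉ F) :
    ¬ ∃ (s : ℕ) (g : Fin s → F[X]),
      (∀ i, ∀ x : ℝ, Real.sqrt (d:ℝ) ≤ x → 0 ≤ pev F (g i) x) ∧
      (∀ f : F[X], (∀ x : ℝ, Real.sqrt (d:ℝ) ≤ x → 0 ≤ pev F f x) → InPre F g f) := by
  rintro ⟨s, g, hpos, hrep⟩
  set r := Real.sqrt (d:ℝ) with hrdef
  have hr2 : r ^ 2 = (d:ℝ) := Real.sq_sqrt hd.le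
  have hr0 : 0 < r := Real.sqrt_pos.mpr hd
  set p : F[X] := X ^ 2 - C d with hp
  have hmon : p.Monic := monic_X_pow_sub_C d two_ne_zero
  have hp0 : p ≠ 0 := hmon.ne_zero
  have hpdeg : p.natDegree = 2 := natDegree_X_pow_sub_C
  have hppevr : pev F p r = 0 := by rw [hp, pev_p hd, hr2, sub_self]
  -- the products of generators and their cofactors
  set G : (Fin s → Bool) → F[X] := fun e => ∏ i, (if e i then g i else 1) with hG
  set w : (Fin s → Bool) → F[X] := fun e => G e /ₘ p with hw
  -- the constant M, defined from the generators alone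
  set M : ℝ := 1 + ∑ e : Fin s → Bool,
      (if 0 < pev F (w e) r then |((w e).coeff 1 : ℝ)| / pev F (w e) r else 0) with hM
  have hMterm : ∀ e : Fin s → Bool, 0 ≤
      (if 0 < pev F (w e) r then |((w e).coeff 1 : ℝ)| / pev F (w e) r else 0) := by
    intro e
    by_cases h : 0 < pev F (w e) r
    · simp only [h, if_true]; positivity
    · simp [h]
  have hM1 : (1:ℝ) ≤ M := by
    rw [hM]
    have := Finset.sum_nonneg (fun e (_ : e ∈ Finset.univ) => hMterm e)
    linarith
  have hM0 : (0:ℝ) < M := lt_of_lt_of_le one_pos hM1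
  have hMbound : ∀ e, 0 < pev F (w e) r →
      |((w e).coeff 1 : ℝ)| ≤ M * pev F (w e) r := by
    intro e he
    have h1 : |((w e).coeff 1 : ℝ)| / pev F (w e) r ≤ M := by
      rw [hM]
      have h2 := Finset.single_le_sum (f := fun e : Fin s → Bool =>
        (if 0 < pev F (w e) r then |((w e).coeff 1 : ℝ)| / pev F (w e) r else 0))
        (fun e _ => hMterm e) (Finset.mem_univ e)
      simp only [he, if_true] at h2
      linarith
    calc |((w e).coeff 1 : ℝ)| = (|((w e).coeff 1 : ℝ)| / pev F (w e) r) * pev F (w e) r := by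
          field_simp
      _ ≤ M * pev F (w e) r := mul_le_mul_of_nonneg_right h1 he.le
  -- choose a rational a with r - 1/M < a < r
  obtain ⟨aq, haq1, haq2⟩ := exists_rat_btwn (show r - 1/M < r by
    have : 0 < 1/M := by positivity
    linarith)
  set a : F := ⟨(aq : ℝ), SubfieldClass.ratCast_mem F aq⟩ with ha
  have har : (a:ℝ) < r := haq2
  have hagt : r - 1/M < (a:ℝ) := haq1
  -- the polynomial f
  set f : F[X] := (X - C a) * p with hf
  have hfev : ∀ x : ℝ, pev F f x = (x - (a:ℝ)) * (x ^ 2 - (d:ℝ)) := by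
    intro x
    rw [hf, pev_mul, pev_p hd]
    congr 1
    simp [pev]
  have hfpos : ∀ x : ℝ, r ≤ x → 0 ≤ pev F f x := by
    intro x hx
    rw [hfev]
    have h1 : 0 ≤ x - (a:ℝ) := by linarith
    have h2 : 0 ≤ x ^ 2 - (d:ℝ) := by nlinarith
    positivity
  obtain ⟨σ, hσ, hfeq0⟩ := hrep f hfpos
  have hfeq : f = ∑ e : Fin s → Bool, σ e * G e := hfeq0
  have hfr : pev F f r = 0 := by rw [hfev, hr2]; ring
  -- nonnegativity of G and terms on [r,∞)
  have hGnn : ∀ e x, r ≤ x → 0 ≤ pev F (G e) x := by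
    intro e x hx
    rw [hG]
    simp only [pev, map_prod]
    apply Finset.prod_nonneg
    intro i _
    by_cases hei : e i
    · simpa [hei, pev] using hpos i x hx
    · simp [hei]
  have htermnn : ∀ e x, r ≤ x → 0 ≤ pev F (σ e * G e) x := by
    intro e x hx
    rw [pev_mul]
    exact mul_nonneg (wsos_nonneg (hσ e) x) (hGnn e x hx)
  -- each term vanishes at r
  have htermr : ∀ e : Fin s → Bool, pev F (σ e * G e) r = 0 := by
    have hsum : ∑ e : Fin s → Bool, pev F (σ e * G e) r = 0 := by
      have h1 := congrArg (fun z => pev F z r) hfeq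
      simp only [pev, map_sum] at h1
      have hfr' : (Polynomial.aeval r) f = 0 := hfr
      rw [hfr'] at h1
      exact h1.symm
    have := (Finset.sum_eq_zero_iff_of_nonneg
      (fun e (_ : e ∈ Finset.univ) => htermnn e r le_rfl)).mp hsum
    exact fun e => this e (Finset.mem_univ e)
  -- degree bound on terms
  have hfdeg : f.natDegree ≤ 3 := by
    rw [hf]
    refine le_trans (natDegree_mul_le) ?_
    have h1 : (X - C a : F[X]).natDegree ≤ 1 := by
      simpa using natDegree_X_sub_C_le a
    omega
  have hfne : f ≠ 0 := by
    intro h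
    have := hfev (r + 1)
    rw [h] at this
    simp only [pev, map_zero] at this
    nlinarith
  have hdegterm : ∀ e, σ e * G e ≠ 0 → (σ e * G e).natDegree ≤ 3 := by
    intro e hne
    have key : ((σ e * G e).map (algebraMap F ℝ)).natDegree ≤
        (f.map (algebraMap F ℝ)).natDegree := by
      apply natDegree_le_of_squeeze _ _ r
      · have hm : (f.map (algebraMap F ℝ)).Monic := by
          rw [hf]; exact ((monic_X_sub_C a).mul hmon).map _
        exact hm.ne_zero
      · intro x hx
        rw [← pev_map]
        exact htermnn e x hx
      · intro x hx
        rw [← pev_map, ← pev_map]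
        rw [hfeq]
        simp only [pev, map_sum]
        refine Finset.single_le_sum (f := fun e' => pev F (σ e' * G e') x) ?_
          (Finset.mem_univ e)
        intro e' _
        exact htermnn e' x hx
    rw [natDegree_map, natDegree_map] at key
    exact le_trans key hfdeg
  -- classification of terms
  have hclass : ∀ e : Fin s → Bool, ∃ t : F, 0 ≤ (t:ℝ) ∧
      σ e * G e = p * (C t * w e) ∧ (t = 0 ∨ 0 < pev F (w e) r) := by
    intro e
    by_cases hz : σ e * G e = 0
    · exact ⟨0, le_rfl, by simp [hz], Or.inl rfl⟩
    have hσe : σ e ≠ 0 := fun h => hz (by rw [h, zero_mul])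
    have hGe : G e ≠ 0 := fun h => hz (by rw [h, mul_zero])
    have hdeg3 := hdegterm e hz
    rw [natDegree_mul hσe hGe] at hdeg3
    -- show pev (G e) r = 0
    have hGr : pev F (G e) r = 0 := by
      by_contra hne
      have hσr : pev F (σ e) r = 0 := by
        have := htermr e
        rw [pev_mul] at this
        rcases mul_eq_zero.mp this with h | h
        · exact h
        · exact absurd h hne
      obtain hdvd := sq_dvd_wsos hd hirr (hσ e) hσr
      have h4 : 4 ≤ (σ e).natDegree := by
        have := natDegree_le_of_dvd hdvd hσe
        rw [natDegree_pow, hpdeg] at this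
        omega
      omega
    have hdvdG : p ∣ G e := dvd_of_root hd hirr _ hGr
    have hGfact : G e = p * w e := by
      have h0 : G e %ₘ p = 0 := (modByMonic_eq_zero_iff_dvd hmon).mpr hdvdG
      have h1 := modByMonic_add_div (G e) p
      rw [h0, zero_add] at h1
      exact h1.symm
    have hwne : w e ≠ 0 := fun h => hGe (by rw [hGfact, h, mul_zero])
    have hdegs : (σ e).natDegree + (w e).natDegree ≤ 1 := by
      rw [hGfact, natDegree_mul hp0 hwne, hpdeg] at hdeg3
      omega
    have hσdeg : (σ e).natDegree ≤ 1 := by omega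
    have hc1 : (σ e).coeff 1 = 0 :=
      coeff_one_eq_zero_of_nonneg (σ e) hσdeg (wsos_nonneg (hσ e))
    have hσconst : σ e = C ((σ e).coeff 0) := by
      have h1 := eq_X_add_C_of_natDegree_le_one hσdeg
      rw [hc1] at h1
      simpa using h1
    set t : F := (σ e).coeff 0 with htdef
    have ht0 : 0 ≤ (t:ℝ) := by
      have := wsos_nonneg (hσ e) 0
      rw [hσconst, pev_C] at this
      exact this
    have hwdeg : (w e).natDegree ≤ 1 := by omega
    -- positivity of w e at r
    have hwr : 0 < pev F (w e) r := by
      have hnn : 0 ≤ pev F (w e) r := by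
        rw [pev_map]
        apply eval_nonneg_boundary _ r
        intro x hx
        rw [← pev_map]
        have hpx : 0 < pev F p x := by
          rw [hp, pev_p hd]
          nlinarith
        have hGx := hGnn e x hx.le
        rw [hGfact, pev_mul] at hGx
        nlinarith
      rcases hnn.lt_or_eq with h | h
      · exact h
      · exfalso
        have hdvdw : p ∣ w e := dvd_of_root hd hirr _ h.symm
        have := natDegree_le_of_dvd hdvdw hwne
        rw [hpdeg] at this
        omega
    exact ⟨t, ht0, by rw [hσconst, hGfact]; ring, Or.inr hwr⟩
  choose t ht0 hteq htw using hclass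
  -- cancel p
  have hkey : X - C a = ∑ e : Fin s → Bool, C (t e) * w e := by
    have h1 : p * (X - C a) = p * ∑ e : Fin s → Bool, C (t e) * w e := by
      calc p * (X - C a) = f := by rw [hf]; ring
        _ = ∑ e : Fin s → Bool, σ e * G e := hfeq
        _ = ∑ e : Fin s → Bool, p * (C (t e) * w e) :=
            Finset.sum_congr rfl (fun e _ => hteq e)
        _ = p * ∑ e : Fin s → Bool, C (t e) * w e := (Finset.mul_sum _ _ _).symm
    exact mul_left_cancel₀ hp0 h1
  -- coefficient of X
  have hcoeff : (1:F) = ∑ e : Fin s → Bool, t e * (w e).coeff 1 := by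
    have h1 := congrArg (fun q : F[X] => q.coeff 1) hkey
    simp only [coeff_sub, coeff_X_one, coeff_C, finset_sum_coeff, coeff_C_mul] at h1
    simpa using h1
  have hcoeffR : (1:ℝ) = ∑ e : Fin s → Bool, (t e : ℝ) * ((w e).coeff 1 : ℝ) := by
    have := congrArg (fun z : F => (z : ℝ)) hcoeff
    push_cast at this
    exact this
  -- value at r
  have hvalr : r - (a:ℝ) = ∑ e : Fin s → Bool, (t e : ℝ) * pev F (w e) r := by
    have h1 := congrArg (fun q : F[X] => pev F q r) hkey
    simp only [pev, map_sum, map_sub, map_mul, aeval_C, aeval_X] at h1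
    rw [show ((Polynomial.aeval r : F[X] →ₐ[F] ℝ) = Polynomial.aeval r) from rfl] at h1
    simpa [pev] using h1
  -- final estimate
  have hsum_le : (1:ℝ) ≤ M * (r - (a:ℝ)) := by
    calc (1:ℝ) = ∑ e : Fin s → Bool, (t e : ℝ) * ((w e).coeff 1 : ℝ) := hcoeffR
      _ ≤ ∑ e : Fin s → Bool, (t e : ℝ) * (M * pev F (w e) r) := by
          apply Finset.sum_le_sum
          intro e _
          rcases htw e with h0 | hpos'
          · have : (t e : ℝ) = 0 := by rw [h0]; simp
            rw [this]; simp
          · calc (t e : ℝ) * ((w e).coeff 1 : ℝ) ≤ (t e : ℝ) * |((w e).coeff 1 : ℝ)| :=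
                mul_le_mul_of_nonneg_left (le_abs_self _) (ht0 e)
            _ ≤ (t e : ℝ) * (M * pev F (w e) r) :=
                mul_le_mul_of_nonneg_left (hMbound e hpos') (ht0 e)
      _ = M * ∑ e : Fin s → Bool, (t e : ℝ) * pev F (w e) r := by
          rw [Finset.mul_sum]
          exact Finset.sum_congr rfl (fun e _ => by ring)
      _ = M * (r - (a:ℝ)) := by rw [← hvalr]
  have hlt : M * (r - (a:ℝ)) < 1 := by
    have h1 : r - (a:ℝ) < 1/M := by linarith
    calc M * (r - (a:ℝ)) < M * (1/M) := by
          apply mul_lt_mul_of_pos_left h1 hM0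
      _ = 1 := by field_simp
  linarith
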